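/- Let n ≥ 1. In the free abelian group with basis φ₁,…,φ_n, consider the weighted elements α_i = φ_i with degree i (1 ≤ i ≤ n), β_j = φ_j − φ_n with degree n − j (1 ≤ j ≤ n−1), and β_n = −φ_n with degree n. Define for each χ in the submonoid generated by these elements n(χ) to be the minimal total degree of a representation of χ as a nonnegative integer combination of the α_i and β_j. Then n(cχ) = c·n(χ) for every positive integer c. -/

import Mathlib

/-- The weights `α_i = φ_i` (degree `i`), `β_j = φ_j − φ_n` (degree `n − j`,
`j ≤ n−1`) and `β_n = −φ_n` (degree `n`), in the free abelian group `ℤⁿ` with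
basis `φ₁,…,φ_n` (0-based indexing: index `j` with `j < n−1` is `β_{j+1}`, the
last index is `β_n`). -/
def alphaWt (n : ℕ) (i : Fin n) : Fin n → ℤ := Pi.single i 1

def betaWt (n : ℕ) (hn : 1 ≤ n) (j : Fin n) : Fin n → ℤ :=
  if (j : ℕ) < n - 1 then Pi.single j 1 - Pi.single (⟨n - 1, by omega⟩ : Fin n) 1
  else -Pi.single (⟨n - 1, by omega⟩ : Fin n) 1

/-- An element represented by nonnegative integer coefficients `a` (of the `α`'s)
and `b` (of the `β`'s). -/
def repWt (n : ℕ) (hn : 1 ≤ n) (a b : Fin n → ℕ) : Fin n → ℤ :=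
  ∑ i : Fin n, (a i : ℤ) • alphaWt n i + ∑ j : Fin n, (b j : ℤ) • betaWt n hn j

/-- The total degree of a representation. -/
def degWt (n : ℕ) (a b : Fin n → ℕ) : ℕ :=
  ∑ i : Fin n, a i * ((i : ℕ) + 1) +
    ∑ j : Fin n, b j * (if (j : ℕ) < n - 1 then n - ((j : ℕ) + 1) else n)


section StmtAux
open Finset

lemma coord1 (n : ℕ) (hn : 1 ≤ n) (a b : Fin n → ℕ) (x : Fin n) (hx : (x:ℕ) < n - 1) :
    repWt n hn a b x = (a x : ℤ) + (b x : ℤ) := by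
  have hxne : x ≠ (⟨n - 1, by omega⟩ : Fin n) := by
    intro h; rw [h] at hx; simp at hx
  unfold repWt
  rw [Pi.add_apply, Finset.sum_apply, Finset.sum_apply]
  have h1 : ∑ i : Fin n, ((a i : ℤ) • alphaWt n i) x = (a x : ℤ) := by
    rw [Finset.sum_eq_single x]
    · simp [alphaWt]
    · intro i _ hix
      simp only [Pi.smul_apply, alphaWt, Pi.single_apply, smul_eq_mul]
      rw [if_neg (fun h => hix h.symm)]; ring
    · simp
  have h2 : ∑ j : Fin n, ((b j : ℤ) • betaWt n hn j) x = (b x : ℤ) := by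
    rw [Finset.sum_eq_single x]
    · simp [betaWt, hx, Pi.single_apply, hxne]
    · intro j _ hjx
      by_cases hj : (j:ℕ) < n - 1
      · simp only [Pi.smul_apply, betaWt, hj, if_true, Pi.sub_apply, Pi.single_apply, smul_eq_mul]
        rw [if_neg (fun h => hjx h.symm), if_neg hxne]; ring
      · simp [betaWt, hj, Pi.single_apply, hxne]
    · simp
  rw [h1, h2]

lemma coord2 (n : ℕ) (hn : 1 ≤ n) (a b : Fin n → ℕ) :
    repWt n hn a b (⟨n - 1, by omega⟩ : Fin n) =
      (a (⟨n - 1, by omega⟩ : Fin n) : ℤ) - ∑ j : Fin n, (b j : ℤ) := by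
  set L : Fin n := (⟨n - 1, by omega⟩ : Fin n) with hL
  unfold repWt
  rw [Pi.add_apply, Finset.sum_apply, Finset.sum_apply]
  have h1 : ∑ i : Fin n, ((a i : ℤ) • alphaWt n i) L = (a L : ℤ) := by
    rw [Finset.sum_eq_single L]
    · simp [alphaWt]
    · intro i _ hix
      simp only [Pi.smul_apply, alphaWt, Pi.single_apply, smul_eq_mul]
      rw [if_neg (fun h => hix h.symm)]; ring
    · simp
  have h2 : ∑ j : Fin n, ((b j : ℤ) • betaWt n hn j) L = -∑ j : Fin n, (b j : ℤ) := by
    rw [← Finset.sum_neg_distrib]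
    apply Finset.sum_congr rfl
    intro j _
    by_cases hj : (j:ℕ) < n - 1
    · have hjL : ¬ L = j := by
        intro h; rw [h] at hL; simp [Fin.ext_iff] at hL; omega
      simp [betaWt, hj, Pi.single_apply, hjL]; exact fun h => (h hL).elim
    · simp [betaWt, hj, Pi.single_apply]; exact fun h => (h hL).elim
  rw [h1, h2]; ring

def Ssum (L : ℕ) (f : ℕ → ℤ) (k : ℕ) : ℤ := ∑ j ∈ Finset.Ico k L, f j

def Fdeg (L : ℕ) (f : ℕ → ℤ) : ℤ :=
  (L+1) * f L + ∑ k ∈ Finset.range L, f k * (k+1)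
    + 2*(L+1)*(max 0 (-f L)) - 2 * ∑ k ∈ Finset.range L, min (max 0 (-f L)) (Ssum L f k)

lemma swapSum (L : ℕ) (g : ℕ → ℤ) :
    ∑ k ∈ Finset.range L, (∑ j ∈ Finset.range (k+1), g j)
      = ∑ j ∈ Finset.range L, ((L:ℤ) - j) * g j := by
  induction L with
  | zero => simp
  | succ L ih =>
    rw [Finset.sum_range_succ, ih]
    push_cast
    rw [Finset.sum_range_succ, Finset.sum_range_succ]
    have h : ∑ j ∈ Finset.range L, ((L:ℤ) + 1 - j) * g j
        = ∑ j ∈ Finset.range L, (((L:ℤ) - j) * g j + g j) :=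
      Finset.sum_congr rfl (fun j _ => by ring)
    rw [h, Finset.sum_add_distrib]
    ring

lemma shiftSum (L : ℕ) (h : ℕ → ℤ) :
    ∑ k ∈ Finset.range L, h k + h L = ∑ k ∈ Finset.range L, h (k+1) + h 0 := by
  rw [← Finset.sum_range_succ, Finset.sum_range_succ']

lemma Ssum_last (L : ℕ) (f : ℕ → ℤ) : Ssum L f L = 0 := by simp [Ssum]

lemma Ssum_step (L : ℕ) (f : ℕ → ℤ) (k : ℕ) (hk : k < L) :
    Ssum L f k = f k + Ssum L f (k+1) := by
  rw [Ssum, Ssum, Finset.sum_eq_sum_Ico_succ_bot hk]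

lemma degId (L : ℕ) (f az bz : ℕ → ℤ)
    (hco : ∀ k < L, f k = az k + bz k)
    (hcoL : az L = f L + ∑ j ∈ Finset.range (L+1), bz j) :
    ∑ k ∈ Finset.range (L+1), az k * (k+1)
      + ∑ k ∈ Finset.range L, bz k * ((L:ℤ) - k) + bz L * (L+1)
    = (L+1) * f L + ∑ k ∈ Finset.range L, f k * (k+1)
      + (∑ k ∈ Finset.range L, 2*((L:ℤ) - k) * bz k + 2*(L+1) * bz L) := by
  rw [Finset.sum_range_succ, hcoL, Finset.sum_range_succ]
  have h1 : ∑ k ∈ Finset.range L, az k * (k+1)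
      = ∑ k ∈ Finset.range L, (f k * (k+1) - bz k * (k+1)) := by
    apply Finset.sum_congr rfl; intro k hk
    rw [Finset.mem_range] at hk
    rw [hco k hk]; ring
  rw [h1, Finset.sum_sub_distrib]
  have h2 : ∑ k ∈ Finset.range L, 2*((L:ℤ) - k) * bz k
      = ∑ k ∈ Finset.range L, (bz k * ((L:ℤ) - k) - bz k * (k+1) + bz k * ((L:ℤ)+1)) := by
    apply Finset.sum_congr rfl; intro k _; ring
  rw [h2, Finset.sum_add_distrib, Finset.sum_sub_distrib, ← Finset.sum_mul]
  push_cast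
  ring

lemma keyLB (L : ℕ) (f az bz : ℕ → ℤ)
    (hco : ∀ k < L, f k = az k + bz k)
    (hcoL : az L = f L + ∑ j ∈ Finset.range (L+1), bz j)
    (haz : ∀ k ≤ L, 0 ≤ az k) (hbz : ∀ k ≤ L, 0 ≤ bz k) :
    Fdeg L f ≤ ∑ k ∈ Finset.range (L+1), az k * (k+1)
      + ∑ k ∈ Finset.range L, bz k * ((L:ℤ) - k) + bz L * (L+1) := by
  rw [degId L f az bz hco hcoL]
  set m : ℤ := max 0 (-f L) with hm
  set B : ℤ := ∑ j ∈ Finset.range (L+1), bz j with hB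
  set t : ℤ := bz L with ht
  have hm0 : 0 ≤ m := le_max_left _ _
  have ht0 : 0 ≤ t := hbz L le_rfl
  have hBnn : 0 ≤ B := Finset.sum_nonneg (fun j hj => hbz j (by
    rw [Finset.mem_range] at hj; omega))
  have hBm : m ≤ B := by
    have h1 : -f L ≤ B := by have := haz L le_rfl; omega
    exact max_le hBnn h1
  have hBt : ∑ j ∈ Finset.range L, bz j = B - t := by
    rw [hB, Finset.sum_range_succ]; ring
  have core : (L+1 : ℤ) * m ≤ ∑ k ∈ Finset.range L, ((L:ℤ) - k) * bz k + (L+1) * t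
      + ∑ k ∈ Finset.range L, min m (Ssum L f k) := by
    rw [← swapSum]
    have hs := shiftSum L (fun k => min m (Ssum L f k))
    simp only [Ssum_last] at hs
    rw [min_eq_right hm0] at hs
    have perk : ∀ k ∈ Finset.range L,
        m - t ≤ (∑ j ∈ Finset.range (k+1), bz j) + min m (Ssum L f (k+1)) := by
      intro k hk
      rw [Finset.mem_range] at hk
      have hC : 0 ≤ ∑ j ∈ Finset.range (k+1), bz j :=
        Finset.sum_nonneg (fun j hj => hbz j (by rw [Finset.mem_range] at hj; omega))
      rcases le_total m (Ssum L f (k+1)) with h | h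
      · rw [min_eq_left h]; linarith
      · rw [min_eq_right h]
        have h1 : ∑ j ∈ Finset.Ico (k+1) L, bz j ≤ Ssum L f (k+1) := by
          apply Finset.sum_le_sum
          intro j hj
          rw [Finset.mem_Ico] at hj
          have e1 := hco j hj.2
          have e2 := haz j (le_of_lt hj.2)
          linarith
        have h2 : ∑ j ∈ Finset.range (k+1), bz j + ∑ j ∈ Finset.Ico (k+1) L, bz j
            = ∑ j ∈ Finset.range L, bz j := Finset.sum_range_add_sum_Ico _ (by omega)
        linarith
    have sum_perk := Finset.sum_le_sum perk
    rw [Finset.sum_add_distrib, Finset.sum_const, Finset.card_range, nsmul_eq_mul] at sum_perk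
    have hS0 : m - t ≤ min m (Ssum L f 0) := by
      rcases le_total m (Ssum L f 0) with h | h
      · rw [min_eq_left h]; linarith
      · rw [min_eq_right h]
        have h1 : ∑ j ∈ Finset.Ico 0 L, bz j ≤ Ssum L f 0 := by
          apply Finset.sum_le_sum
          intro j hj
          rw [Finset.mem_Ico] at hj
          have e1 := hco j hj.2
          have e2 := haz j (le_of_lt hj.2)
          linarith
        rw [← Finset.range_eq_Ico] at h1
        linarith
    linarith
  have h2 : ∑ k ∈ Finset.range L, 2*((L:ℤ)-k)*bz k
      = 2 * ∑ k ∈ Finset.range L, ((L:ℤ)-k)*bz k := by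
    rw [Finset.mul_sum]; exact Finset.sum_congr rfl (fun k _ => by ring)
  rw [Fdeg, ← hm, h2]
  linarith

lemma keyUB (L : ℕ) (f : ℕ → ℤ) (hf : ∀ k < L, 0 ≤ f k) :
    ∃ az bz : ℕ → ℤ,
      (∀ k < L, f k = az k + bz k) ∧
      az L = f L + ∑ j ∈ Finset.range (L+1), bz j ∧
      (∀ k ≤ L, 0 ≤ az k) ∧ (∀ k ≤ L, 0 ≤ bz k) ∧
      Fdeg L f = ∑ k ∈ Finset.range (L+1), az k * (k+1)
        + ∑ k ∈ Finset.range L, bz k * ((L:ℤ) - k) + bz L * (L+1) := by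
  set m : ℤ := max 0 (-f L) with hm
  set g : ℕ → ℤ := fun k => min m (Ssum L f k) with hg
  have hm0 : 0 ≤ m := le_max_left _ _
  have hgL : g L = 0 := by rw [hg]; simp only [Ssum_last]; exact min_eq_right hm0
  have hgmono : ∀ k < L, g (k+1) ≤ g k := by
    intro k hk
    exact min_le_min le_rfl (by rw [Ssum_step L f k hk]; linarith [hf k hk])
  have hglip : ∀ k < L, g k ≤ g (k+1) + f k := by
    intro k hk
    rcases le_total m (Ssum L f (k+1)) with h | h
    · have : g (k+1) = m := min_eq_left h
      rw [this]; have := min_le_left m (Ssum L f k); linarith [hf k hk]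
    · have e1 : g (k+1) = Ssum L f (k+1) := min_eq_right h
      have e2 : g k ≤ Ssum L f k := min_le_right _ _
      rw [Ssum_step L f k hk] at e2
      rw [e1]; linarith
  refine ⟨fun k => if k < L then f k - (g k - g (k+1)) else f L + m,
          fun k => if k < L then g k - g (k+1) else m - g 0, ?_, ?_, ?_, ?_, ?_⟩
  · intro k hk; simp only [if_pos hk]; ring
  · have hbzsum : ∑ j ∈ Finset.range (L+1),
        (if j < L then g j - g (j+1) else m - g 0) = m := by
      rw [Finset.sum_range_succ, if_neg (lt_irrefl L)]
      have h1 : ∑ j ∈ Finset.range L, (if j < L then g j - g (j+1) else m - g 0)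
          = ∑ j ∈ Finset.range L, (g j - g (j+1)) := by
        apply Finset.sum_congr rfl; intro j hj
        rw [Finset.mem_range] at hj; rw [if_pos hj]
      rw [h1, Finset.sum_range_sub' g, hgL]; ring
    simp only [if_neg (lt_irrefl L), hbzsum]
  · intro k hk
    by_cases h : k < L
    · simp only [if_pos h]; have := hglip k h; linarith
    · simp only [if_neg h]
      rcases le_total (f L) 0 with h' | h'
      · have : m = -f L := max_eq_right (by linarith)
        rw [this]; linarith
      · have : (0:ℤ) ≤ m := hm0
        linarith
  · intro k hk
    by_cases h : k < L
    · simp only [if_pos h]; have := hgmono k h; linarith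
    · simp only [if_neg h]; have : g 0 ≤ m := min_le_left _ _; linarith
  · rw [degId L f _ _ ?co ?coL]
    case co => intro k hk; simp only [if_pos hk]; ring
    case coL =>
      have hbzsum : ∑ j ∈ Finset.range (L+1),
          (if j < L then g j - g (j+1) else m - g 0) = m := by
        rw [Finset.sum_range_succ, if_neg (lt_irrefl L)]
        have h1 : ∑ j ∈ Finset.range L, (if j < L then g j - g (j+1) else m - g 0)
            = ∑ j ∈ Finset.range L, (g j - g (j+1)) := by
          apply Finset.sum_congr rfl; intro j hj
          rw [Finset.mem_range] at hj; rw [if_pos hj]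
        rw [h1, Finset.sum_range_sub' g, hgL]; ring
      simp only [if_neg (lt_irrefl L), hbzsum]
    -- remains: Fdeg L f = base + (∑ 2(L-k) bz k + 2(L+1) bz L)
    have hC : ∑ k ∈ Finset.range L,
        ((L:ℤ) - k) * (if k < L then g k - g (k+1) else m - g 0)
        = (L+1) * g 0 - ∑ k ∈ Finset.range L, g k := by
      rw [← swapSum]
      have h1 : ∀ k ∈ Finset.range L, ∑ j ∈ Finset.range (k+1),
          (if j < L then g j - g (j+1) else m - g 0) = g 0 - g (k+1) := by
        intro k hk; rw [Finset.mem_range] at hk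
        have h2 : ∑ j ∈ Finset.range (k+1), (if j < L then g j - g (j+1) else m - g 0)
            = ∑ j ∈ Finset.range (k+1), (g j - g (j+1)) := by
          apply Finset.sum_congr rfl; intro j hj
          rw [Finset.mem_range] at hj; rw [if_pos (by omega)]
        rw [h2, Finset.sum_range_sub' g]
      rw [Finset.sum_congr rfl h1, Finset.sum_sub_distrib, Finset.sum_const,
        Finset.card_range, nsmul_eq_mul]
      have hsh := shiftSum L g
      rw [hgL] at hsh
      push_cast
      linarith
    have h2 : ∑ k ∈ Finset.range L,
        2*((L:ℤ)-k) * (if k < L then g k - g (k+1) else m - g 0)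
        = 2 * ∑ k ∈ Finset.range L,
          ((L:ℤ)-k) * (if k < L then g k - g (k+1) else m - g 0) := by
      rw [Finset.mul_sum]; exact Finset.sum_congr rfl (fun k _ => by ring)
    rw [h2, hC, if_neg (lt_irrefl L)]
    rw [Fdeg, ← hm]
    have : ∑ k ∈ Finset.range L, min m (Ssum L f k) = ∑ k ∈ Finset.range L, g k := rfl
    rw [this]
    ring

lemma degZ (L : ℕ) (a b : Fin (L+1) → ℕ) (A B : ℕ → ℤ)
    (hA : ∀ i : Fin (L+1), A i.val = (a i : ℤ)) (hB : ∀ i : Fin (L+1), B i.val = (b i : ℤ)) :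
    (degWt (L+1) a b : ℤ) = ∑ k ∈ Finset.range (L+1), A k * (k+1)
      + ∑ k ∈ Finset.range L, B k * ((L:ℤ) - k) + B L * ((L:ℤ)+1) := by
  rw [degWt]
  push_cast
  have e1 : ∑ i : Fin (L+1), (a i : ℤ) * ((i:ℕ) + 1)
      = ∑ k ∈ Finset.range (L+1), A k * (k+1) := by
    rw [← Fin.sum_univ_eq_sum_range (fun k => A k * (k+1)) (L+1)]
    exact Finset.sum_congr rfl (fun i _ => by rw [hA i])
  have e2 : ∑ x : Fin (L+1), (b x : ℤ) *
        (if (x:ℕ) < L then ((L - (x:ℕ) : ℕ) : ℤ) else (L:ℤ) + 1)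
      = ∑ k ∈ Finset.range L, B k * ((L:ℤ) - k) + B L * ((L:ℤ)+1) := by
    have e3 : ∑ x : Fin (L+1), (b x : ℤ) *
          (if (x:ℕ) < L then ((L - (x:ℕ) : ℕ) : ℤ) else (L:ℤ) + 1)
        = ∑ k ∈ Finset.range (L+1), B k * (if k < L then ((L:ℤ) - k) else ((L:ℤ)+1)) := by
      rw [← Fin.sum_univ_eq_sum_range (fun k => B k * (if k < L then ((L:ℤ) - k) else ((L:ℤ)+1))) (L+1)]
      apply Finset.sum_congr rfl
      intro j _
      rw [hB j]
      congr 1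
      by_cases hj : (j:ℕ) < L
      · rw [if_pos hj, if_pos hj, Nat.cast_sub (le_of_lt hj)]
      · rw [if_neg hj, if_neg hj]
    rw [e3, Finset.sum_range_succ, if_neg (lt_irrefl L)]
    congr 1
    apply Finset.sum_congr rfl
    intro k hk
    rw [Finset.mem_range] at hk
    rw [if_pos hk]
  rw [e1, e2]
  ring

lemma Fdeg_smul (L : ℕ) (f : ℕ → ℤ) (c : ℕ) :
    Fdeg L (fun k => (c:ℤ) * f k) = c * Fdeg L f := by
  have hc : (0:ℤ) ≤ c := Int.natCast_nonneg c
  have hmax : max 0 (-((c:ℤ) * f L)) = c * max 0 (-f L) := by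
    rw [mul_max_of_nonneg _ _ hc, mul_zero, mul_neg]
  have hS : ∀ k, Ssum L (fun k => (c:ℤ) * f k) k = c * Ssum L f k := by
    intro k; rw [Ssum, Ssum, Finset.mul_sum]
  rw [Fdeg, Fdeg, hmax]
  have h1 : ∑ k ∈ Finset.range L, (fun k => (c:ℤ) * f k) k * (k+1)
      = c * ∑ k ∈ Finset.range L, f k * (k+1) := by
    rw [Finset.mul_sum]; exact Finset.sum_congr rfl (fun k _ => by ring)
  have h2 : ∑ k ∈ Finset.range L, min ((c:ℤ) * max 0 (-f L)) (Ssum L (fun k => (c:ℤ) * f k) k)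
      = c * ∑ k ∈ Finset.range L, min (max 0 (-f L)) (Ssum L f k) := by
    rw [Finset.mul_sum]
    apply Finset.sum_congr rfl
    intro k _
    rw [hS k, mul_min_of_nonneg _ _ hc]
  rw [h1, h2]
  ring

lemma repWt_smul (n : ℕ) (hn : 1 ≤ n) (a b : Fin n → ℕ) (c : ℕ) :
    repWt n hn (fun i => c * a i) (fun i => c * b i) = (c:ℤ) • repWt n hn a b := by
  funext x
  by_cases hx : (x:ℕ) < n - 1
  · rw [Pi.smul_apply, coord1 n hn _ _ x hx, coord1 n hn a b x hx]
    push_cast [smul_eq_mul]; ring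
  · have hxe : x = (⟨n - 1, by omega⟩ : Fin n) := by
      apply Fin.ext; simp only []; omega
    rw [hxe, Pi.smul_apply, coord2 n hn, coord2 n hn a b]
    have : ∑ j : Fin n, ((c * b j : ℕ) : ℤ) = (c:ℤ) * ∑ j : Fin n, (b j : ℤ) := by
      rw [Finset.mul_sum]; push_cast; rfl
    rw [this]
    push_cast [smul_eq_mul]; ring

lemma degWt_smul (n : ℕ) (a b : Fin n → ℕ) (c : ℕ) :
    degWt n (fun i => c * a i) (fun i => c * b i) = c * degWt n a b := by
  rw [degWt, degWt, Nat.mul_add, Finset.mul_sum, Finset.mul_sum]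
  congr 1 <;> exact Finset.sum_congr rfl (fun i _ => by ring)

lemma sInf_eq (L : ℕ) (hn : 1 ≤ L + 1) (χ : Fin (L+1) → ℤ)
    (hχ : ∃ a b : Fin (L+1) → ℕ, χ = repWt (L+1) hn a b) :
    ∃ d : ℕ, (d:ℤ) = Fdeg L (fun k => if h : k < L+1 then χ ⟨k,h⟩ else 0) ∧
      sInf {d' : ℕ | ∃ a b : Fin (L+1) → ℕ, χ = repWt (L+1) hn a b ∧ d' = degWt (L+1) a b}
        = d := by
  set f : ℕ → ℤ := fun k => if h : k < L+1 then χ ⟨k,h⟩ else 0 with hf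
  have hfval : ∀ k (hk : k < L+1), f k = χ ⟨k,hk⟩ := by
    intro k hk; rw [hf]; exact dif_pos hk
  have hL1 : (L:ℕ) < L + 1 := by omega
  have hlastval : ((⟨L + 1 - 1, by omega⟩ : Fin (L+1)) : ℕ) = L := by simp
  have hlast : (⟨L + 1 - 1, by omega⟩ : Fin (L+1)) = ⟨L, hL1⟩ := by
    apply Fin.ext; simp
  -- lower bound for any representation
  have extract : ∀ a b : Fin (L+1) → ℕ, χ = repWt (L+1) hn a b →
      Fdeg L f ≤ (degWt (L+1) a b : ℤ) := by
    intro a b hab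
    set A : ℕ → ℤ := fun k => if h : k < L+1 then (a ⟨k,h⟩ : ℤ) else 0 with hA'
    set B : ℕ → ℤ := fun k => if h : k < L+1 then (b ⟨k,h⟩ : ℤ) else 0 with hB'
    have hA : ∀ i : Fin (L+1), A i.val = (a i : ℤ) := by
      intro i; rw [hA']; simp [i.isLt]
    have hB : ∀ i : Fin (L+1), B i.val = (b i : ℤ) := by
      intro i; rw [hB']; simp [i.isLt]
    have hco : ∀ k < L, f k = A k + B k := by
      intro k hk
      have hk1 : k < L + 1 := by omega
      have hx : ((⟨k, hk1⟩ : Fin (L+1)) : ℕ) < (L+1) - 1 := by simpa using hk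
      have h1 := coord1 (L+1) hn a b ⟨k, hk1⟩ hx
      rw [← hab] at h1
      rw [hfval k hk1, h1, hA', hB']
      simp [hk1]
    have hcoL : A L = f L + ∑ j ∈ Finset.range (L+1), B j := by
      have h2 := coord2 (L+1) hn a b
      rw [← hab, hlast] at h2
      have hsum : ∑ j : Fin (L+1), (b j : ℤ) = ∑ j ∈ Finset.range (L+1), B j := by
        rw [← Fin.sum_univ_eq_sum_range B (L+1)]
        exact Finset.sum_congr rfl fun i _ => (hB i).symm
      rw [hsum] at h2
      have hAL : A L = (a ⟨L, hL1⟩ : ℤ) := hA ⟨L, hL1⟩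
      rw [hAL, hfval L hL1]
      linarith
    have haz : ∀ k ≤ L, 0 ≤ A k := by
      intro k hk
      rw [hA']
      have hk1 : k < L + 1 := by omega
      simp [hk1]
    have hbz : ∀ k ≤ L, 0 ≤ B k := by
      intro k hk
      rw [hB']
      have hk1 : k < L + 1 := by omega
      simp [hk1]
    have := keyLB L f A B hco hcoL haz hbz
    rw [degZ L a b A B hA hB]
    calc Fdeg L f ≤ _ := this
      _ = _ := by ring
  -- construction achieving the bound
  have hfpos : ∀ k < L, 0 ≤ f k := by
    obtain ⟨a0, b0, h0⟩ := hχ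
    intro k hk
    have hk1 : k < L + 1 := by omega
    have hx : ((⟨k, hk1⟩ : Fin (L+1)) : ℕ) < (L+1) - 1 := by simpa using hk
    have h1 := coord1 (L+1) hn a0 b0 ⟨k, hk1⟩ hx
    rw [← h0] at h1
    rw [hfval k hk1, h1]
    positivity
  obtain ⟨az, bz, uco, ucoL, uaz, ubz, udeg⟩ := keyUB L f hfpos
  set a : Fin (L+1) → ℕ := fun i => (az i.val).toNat with ha'
  set b : Fin (L+1) → ℕ := fun i => (bz i.val).toNat with hb'
  have haz' : ∀ i : Fin (L+1), (a i : ℤ) = az i.val := by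
    intro i
    rw [ha']
    exact Int.toNat_of_nonneg (uaz i.val (Nat.lt_succ_iff.mp i.isLt))
  have hbz' : ∀ i : Fin (L+1), (b i : ℤ) = bz i.val := by
    intro i
    rw [hb']
    exact Int.toNat_of_nonneg (ubz i.val (Nat.lt_succ_iff.mp i.isLt))
  have hrep : χ = repWt (L+1) hn a b := by
    funext x
    by_cases hx : (x:ℕ) < L
    · rw [coord1 (L+1) hn a b x (by simpa using hx), haz' x, hbz' x, ← uco x.val hx,
        hfval x.val x.isLt]
    · have hxe : x = ⟨L, hL1⟩ := by
        apply Fin.ext; have := x.isLt; simp only []; omega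
      rw [hxe, ← hlast, coord2 (L+1) hn a b, hlast]
      have hsum : ∑ j : Fin (L+1), (b j : ℤ) = ∑ j ∈ Finset.range (L+1), bz j := by
        rw [← Fin.sum_univ_eq_sum_range bz (L+1)]
        exact Finset.sum_congr rfl fun i _ => hbz' i
      rw [hsum, haz' ⟨L, hL1⟩]
      simp only []
      rw [ucoL, ← hfval L hL1]
      ring
  have hdeg : (degWt (L+1) a b : ℤ) = Fdeg L f := by
    rw [degZ L a b (fun k => az k) (fun k => bz k) (fun i => (haz' i).symm)
      (fun i => (hbz' i).symm), udeg]
  refine ⟨degWt (L+1) a b, hdeg, ?_⟩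
  have mem : degWt (L+1) a b ∈
      {d' : ℕ | ∃ a' b' : Fin (L+1) → ℕ, χ = repWt (L+1) hn a' b' ∧ d' = degWt (L+1) a' b'} :=
    ⟨a, b, hrep, rfl⟩
  apply le_antisymm (Nat.sInf_le mem)
  apply le_csInf ⟨_, mem⟩
  rintro d' ⟨a', b', h', rfl⟩
  have h1 := extract a' b' h'
  rw [← hdeg] at h1
  exact_mod_cast h1

end StmtAux

/-- the minimal total degree `n(χ)` of a presentation of `χ` as a
nonnegative integer combination of the `α_i` and `β_j` satisfies `n(cχ) = c·n(χ)`. -/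
theorem stmt10 (n : ℕ) (hn : 1 ≤ n) (χ : Fin n → ℤ)
    (hχ : ∃ a b : Fin n → ℕ, χ = repWt n hn a b) (c : ℕ) (hc : 0 < c) :
    sInf {d : ℕ | ∃ a b : Fin n → ℕ, (c : ℤ) • χ = repWt n hn a b ∧ d = degWt n a b} =
      c * sInf {d : ℕ | ∃ a b : Fin n → ℕ, χ = repWt n hn a b ∧ d = degWt n a b} := by
  obtain ⟨L, rfl⟩ : ∃ L, n = L + 1 := ⟨n - 1, by omega⟩
  have hχc : ∃ a b : Fin (L+1) → ℕ, (c:ℤ) • χ = repWt (L+1) hn a b := by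
    obtain ⟨a0, b0, h0⟩ := hχ
    exact ⟨fun i => c * a0 i, fun i => c * b0 i, by rw [repWt_smul, ← h0]⟩
  obtain ⟨d1, hd1, hs1⟩ := sInf_eq L hn χ hχ
  obtain ⟨d2, hd2, hs2⟩ := sInf_eq L hn ((c:ℤ) • χ) hχc
  rw [hs1, hs2]
  have hfc : (fun k => if h : k < L+1 then ((c:ℤ) • χ) ⟨k,h⟩ else 0)
      = fun k => (c:ℤ) * (if h : k < L+1 then χ ⟨k,h⟩ else 0) := by
    funext k
    by_cases hk : k < L + 1
    · simp [hk]
    · simp [hk]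
  rw [hfc, Fdeg_smul, ← hd1] at hd2
  exact_mod_cast hd2
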